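/- arXiv:1203.1527 — 7 statements merged into one kernel-verified Lean document; each statement's English description precedes it below -/
import Mathlib

section
/- If C is a binary linear [48,k] code all of whose nonzero codewords have Hamming weight exactly 16 (a constant-weight-16 code of length 48), then k ≤ 5. -/
/-- Hamming weight of a binary vector. -/
def wt {n : ℕ} (x : Fin n → ZMod 2) : ℕ :=
  (Finset.univ.filter fun i => x i ≠ 0).card

/-- Dual code with respect to the standard bilinear form. -/
def dualCode {n : ℕ} (C : Submodule (ZMod 2) (Fin n → ZMod 2)) :
    Submodule (ZMod 2) (Fin n → ZMod 2) where
  carrier := {x | ∀ c ∈ C, ∑ i, x i * c i = 0}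
  add_mem' := by
    intro a b ha hb c hc
    have ha' := ha c hc
    have hb' := hb c hc
    simp only [Set.mem_setOf_eq, Pi.add_apply, add_mul] at *
    rw [Finset.sum_add_distrib, ha', hb', add_zero]
  zero_mem' := by
    intro c hc
    simp
  smul_mem' := by
    intro r a ha c hc
    have ha' := ha c hc
    simp only [Set.mem_setOf_eq, Pi.smul_apply, smul_eq_mul, mul_assoc] at *
    rw [← Finset.mul_sum, ha', mul_zero]

/-- Minimum distance (minimum nonzero Hamming weight) of a binary linear code. -/
noncomputable def minDist {n : ℕ} (C : Submodule (ZMod 2) (Fin n → ZMod 2)) : ℕ :=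
  sInf {w | ∃ c ∈ C, c ≠ 0 ∧ wt c = w}

/-- Number of codewords of weight `w` in `C` (the weight distribution `A_w`). -/
noncomputable def wtCount {n : ℕ} (C : Submodule (ZMod 2) (Fin n → ZMod 2)) (w : ℕ) : ℕ :=
  Nat.card {c : Fin n → ZMod 2 // c ∈ C ∧ wt c = w}

/-- A binary linear [48,k] code all of whose nonzero codewords have weight 16
has dimension k ≤ 5. -/
theorem stmt_0 (C : Submodule (ZMod 2) (Fin 48 → ZMod 2)) (k : ℕ)
    (hk : Module.finrank (ZMod 2) C = k)
    (hw : ∀ c ∈ C, c ≠ 0 → wt c = 16) : k ≤ 5 := by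
  classical
  have hfin : Fintype ↥C := Fintype.ofFinite _
  have hcard : Fintype.card ↥C = 2 ^ k := by
    rw [← hk]
    have := Module.card_eq_pow_finrank (K := ZMod 2) (V := ↥C)
    simpa [ZMod.card] using this
  -- total weight
  set T : ℕ := ∑ c : ↥C, wt (c : Fin 48 → ZMod 2) with hT
  have hzero : wt ((0 : ↥C) : Fin 48 → ZMod 2) = 0 := by
    simp [wt]
  have hT16 : T + 16 = 16 * 2 ^ k := by
    have h1 : ∀ c : ↥C, wt (c : Fin 48 → ZMod 2) + (if c = (0 : ↥C) then 16 else 0) = 16 := by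
      intro c
      by_cases hc : c = 0
      · subst hc; simp [wt]
      · have : (c : Fin 48 → ZMod 2) ≠ 0 := by
          simpa [Submodule.coe_eq_zero] using hc
        rw [hw c c.2 this]
        simp [hc]
    calc T + 16
        = ∑ c : ↥C, wt (c : Fin 48 → ZMod 2) + ∑ c : ↥C, (if c = (0 : ↥C) then 16 else 0) := by
          rw [Finset.sum_ite_eq' Finset.univ (0 : ↥C) (fun _ => 16)]
          simp
          exact hT
      _ = ∑ c : ↥C, (wt (c : Fin 48 → ZMod 2) + (if c = (0 : ↥C) then 16 else 0)) := by
          rw [Finset.sum_add_distrib]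
      _ = ∑ _c : ↥C, 16 := by exact Finset.sum_congr rfl fun c _ => h1 c
      _ = 16 * 2 ^ k := by simp [Finset.sum_const, Finset.card_univ, hcard, mul_comm]
  -- column counts
  have hswap : T = ∑ i : Fin 48, (Finset.univ.filter
      (fun c : ↥C => (c : Fin 48 → ZMod 2) i ≠ 0)).card := by
    rw [hT]
    have : ∀ c : ↥C, wt (c : Fin 48 → ZMod 2)
        = ∑ i : Fin 48, (if (c : Fin 48 → ZMod 2) i ≠ 0 then 1 else 0) := by
      intro c; rw [wt, Finset.card_filter]
    rw [Finset.sum_congr rfl fun c _ => this c, Finset.sum_comm]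
    exact Finset.sum_congr rfl fun i _ => (Finset.card_filter _ _).symm
  -- each column count is 0 or 2^(k-1) : precisely 2*n_i ∈ {0, 2^k}
  have hcol : ∀ i : Fin 48, 2 ^ k ∣ 2 * (Finset.univ.filter
      (fun c : ↥C => (c : Fin 48 → ZMod 2) i ≠ 0)).card := by
    intro i
    set A := Finset.univ.filter (fun c : ↥C => (c : Fin 48 → ZMod 2) i ≠ 0) with hA
    by_cases hne : A = ∅
    · rw [hne]; simp
    · obtain ⟨c0, hc0⟩ := Finset.nonempty_iff_ne_empty.2 hne
      rw [hA, Finset.mem_filter] at hc0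
      have hc0i : (c0 : Fin 48 → ZMod 2) i ≠ 0 := hc0.2
      have hadd : ∀ a b : ZMod 2, a ≠ 0 → b ≠ 0 → a + b = 0 := by decide
      have hself : ∀ a : ZMod 2, a + a = 0 := by decide
      have hcc : c0 + c0 = 0 := by
        ext j
        exact hself _
      set B := Finset.univ.filter (fun c : ↥C => ¬ (c : Fin 48 → ZMod 2) i ≠ 0) with hB
      have hAB : A.card = B.card := by
        apply Finset.card_bij' (fun c _ => c + c0) (fun c _ => c + c0)
        · intro a ha
          rw [hA, Finset.mem_filter] at ha
          rw [hB, Finset.mem_filter]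
          refine ⟨Finset.mem_univ _, ?_⟩
          push_neg
          show ((a : Fin 48 → ZMod 2) + (c0 : Fin 48 → ZMod 2)) i = 0
          exact hadd _ _ ha.2 hc0i
        · intro b hb
          rw [hB, Finset.mem_filter] at hb
          push_neg at hb
          rw [hA, Finset.mem_filter]
          refine ⟨Finset.mem_univ _, ?_⟩
          show ((b : Fin 48 → ZMod 2) + (c0 : Fin 48 → ZMod 2)) i ≠ 0
          rw [Pi.add_apply, hb.2, zero_add]
          exact hc0i
        · intro a _; rw [add_assoc, hcc, add_zero]
        · intro b _; rw [add_assoc, hcc, add_zero]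
      have hsum : A.card + B.card = 2 ^ k := by
        rw [hA, hB, Finset.card_filter_add_card_filter_not, Finset.card_univ, hcard]
      rw [two_mul]
      nth_rewrite 2 [hAB]
      rw [hsum]
  have hdvdT : 2 ^ k ∣ 2 * T := by
    rw [hswap, Finset.mul_sum]
    exact Finset.dvd_sum fun i _ => hcol i
  have hdvd32 : (2 : ℕ) ^ k ∣ 32 := by
    have h1 : (2 : ℕ) ^ k ∣ 32 * 2 ^ k := dvd_mul_left _ _
    have h2 : 32 * 2 ^ k - 2 * T = 32 := by omega
    calc (2:ℕ) ^ k ∣ 32 * 2 ^ k - 2 * T := Nat.dvd_sub h1 hdvdT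
      _ = 32 := h2
  have : (2:ℕ) ^ k ≤ 2 ^ 5 := Nat.le_of_dvd (by norm_num) hdvd32
  exact Nat.pow_le_pow_iff_right (by norm_num) |>.mp this
end

section
/- There does not exist a binary linear [48,17] code C such that every nonzero codeword of C has Hamming weight in the set {16, 20, 24, 28, 32, 48} and C contains the all-one vector (i.e., C is self-complementary with those doubly-even weights). -/
namespace Cert

/-- The sign character on `ZMod 2`, valued in `ℤ`. -/
def chi (t : ZMod 2) : ℤ := if t = 0 then 1 else -1

lemma chi_add : ∀ s t : ZMod 2, chi (s + t) = chi s * chi t := by decide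

lemma chi_succ : ∀ t : ZMod 2, chi (t + 1) = -chi t := by decide

lemma chi_sum (S : Finset (Fin 48)) (c : Fin 48 → ZMod 2) :
    chi (∑ i ∈ S, c i) = ∏ i ∈ S, chi (c i) := by
  classical
  induction S using Finset.cons_induction with
  | empty => simp [chi]
  | cons a s ha ih => rw [Finset.sum_cons, Finset.prod_cons, chi_add _ _, ih]

/-- Coefficients of the MacWilliams/linear-programming certificate. -/
def lam : Fin 17 → ℤ :=
  ![-255493744867,
    202621553063, 202621553063,
    -98711117749, -98711117749,
    27137002159, 27137002159,
    -3347860833, -3347860833,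
    48176192, 48176192,
    -881075, -881075,
    678, 678,
    20, 20]

/-- The `b`-values of the certificate. -/
def bv : Fin 17 → ℤ :=
  ![0, 1, -1, 2, -2, 3, -3, 4, -4, 6, -6, 8, -8, 12, -12, 16, -16]

/-- The nonnegative weight function `q u = ∑ r, lam r * 32^(48-u) * bv r ^ u`. -/
def q (u : ℕ) : ℤ := ∑ r, lam r * (32 ^ (48 - u) * bv r ^ u)

/-- The certificate polynomial evaluated at weight `w`. -/
def Tw (w : ℕ) : ℤ := ∑ r, lam r * ((32 + bv r) ^ (48 - w) * (32 - bv r) ^ w)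

lemma expand (b : ℤ) (c : Fin 48 → ZMod 2) :
    (∏ i, (32 + b * chi (c i))) =
      ∑ S ∈ (Finset.univ : Finset (Fin 48)).powerset,
        32 ^ (48 - S.card) * b ^ S.card * chi (∑ i ∈ S, c i) := by
  classical
  have h : (∏ i, (32 + b * chi (c i))) = ∏ i, (b * chi (c i) + 32) := by
    exact Finset.prod_congr rfl fun i _ => by ring
  rw [h, Finset.prod_add]
  refine Finset.sum_congr rfl fun S hS => ?_
  rw [Finset.prod_const, Finset.prod_mul_distrib, Finset.prod_const, ← chi_sum,
    Finset.card_sdiff_of_subset (Finset.subset_univ S), Finset.card_univ, Fintype.card_fin]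
  ring

lemma prod_eq (b : ℤ) (c : Fin 48 → ZMod 2) :
    (∏ i, (32 + b * chi (c i))) = (32 + b) ^ (48 - wt c) * (32 - b) ^ (wt c) := by
  classical
  rw [← Finset.prod_filter_mul_prod_filter_not Finset.univ (fun i => c i ≠ 0)]
  have h1 : ∀ i ∈ Finset.univ.filter (fun i => c i ≠ 0),
      32 + b * chi (c i) = 32 - b := by
    intro i hi
    have hi' : c i ≠ 0 := (Finset.mem_filter.mp hi).2
    rw [chi, if_neg hi']; ring
  have h2 : ∀ i ∈ Finset.univ.filter (fun i => ¬ c i ≠ 0),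
      32 + b * chi (c i) = 32 + b := by
    intro i hi
    have hi' : c i = 0 := not_not.mp (Finset.mem_filter.mp hi).2
    rw [hi', chi, if_pos rfl]; ring
  have hcard : (Finset.univ.filter (fun i => ¬ c i ≠ 0)).card = 48 - wt c := by
    have := Finset.card_filter_add_card_filter_not
      (s := (Finset.univ : Finset (Fin 48))) (p := fun i => c i ≠ 0)
    simp only [Finset.card_univ, Fintype.card_fin] at this
    have hwt : (Finset.univ.filter (fun i => c i ≠ 0)).card = wt c := rfl
    omega
  rw [Finset.prod_congr rfl h1, Finset.prod_congr rfl h2, Finset.prod_const,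
    Finset.prod_const, hcard]
  have hwt : (Finset.univ.filter (fun i => c i ≠ 0)).card = wt c := rfl
  rw [hwt]; ring

lemma ne_zero_eq_one : ∀ t : ZMod 2, t ≠ 0 → t = 1 := by decide

set_option maxHeartbeats 4000000 in
lemma qnn : ∀ u : ℕ, u ≤ 48 → 0 ≤ q u := by
  intro u hu
  interval_cases u <;>
    norm_num [q, lam, bv, Fin.sum_univ_succ]

lemma T16 : Tw 16 ≤ -1766594164608117023170873970686744216754727916455112032371793518751713546164948 := by
  norm_num [Tw, lam, bv, Fin.sum_univ_succ]

lemma T20 : Tw 20 ≤ -1766594164608117023170873970686744216754727916455112032371793518751713546164948 := by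
  norm_num [Tw, lam, bv, Fin.sum_univ_succ]

lemma T24 : Tw 24 ≤ -1766594164608117023170873970686744216754727916455112032371793518751713546164948 := by
  norm_num [Tw, lam, bv, Fin.sum_univ_succ]

lemma T28 : Tw 28 ≤ -1766594164608117023170873970686744216754727916455112032371793518751713546164948 := by
  norm_num [Tw, lam, bv, Fin.sum_univ_succ]

lemma T32 : Tw 32 ≤ -1766594164608117023170873970686744216754727916455112032371793518751713546164948 := by
  norm_num [Tw, lam, bv, Fin.sum_univ_succ]

lemma Tzo : Tw 0 + Tw 48 + 1 ≤ 131070 * 1766594164608117023170873970686744216754727916455112032371793518751713546164948 := by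
  norm_num [Tw, lam, bv, Fin.sum_univ_succ]

end Cert

/-- There is no binary [48,17] self-complementary code all of whose nonzero
codewords have weight in {16, 20, 24, 28, 32, 48}. -/
theorem stmt_1 :
    ¬ ∃ C : Submodule (ZMod 2) (Fin 48 → ZMod 2),
      Module.finrank (ZMod 2) C = 17 ∧ (fun _ => (1 : ZMod 2)) ∈ C ∧
      ∀ c ∈ C, c ≠ 0 → wt c ∈ ({16, 20, 24, 28, 32, 48} : Set ℕ) := by
  classical
  rintro ⟨C, hrank, hone, hwt⟩
  haveI : Fintype ↥C := Fintype.ofFinite _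
  set D : ℤ := 1766594164608117023170873970686744216754727916455112032371793518751713546164948
    with hD
  have qnn := Cert.qnn
  have T16 := Cert.T16; have T20 := Cert.T20; have T24 := Cert.T24
  have T28 := Cert.T28; have T32 := Cert.T32
  have Tzo := Cert.Tzo
  rw [← hD] at T16 T20 T24 T28 T32 Tzo
  -- the certificate sum over codewords
  set G : (Fin 48 → ZMod 2) → ℤ :=
    fun c => ∑ r, Cert.lam r * ∏ i, (32 + Cert.bv r * Cert.chi (c i)) with hG
  have hGT : ∀ c, G c = Cert.Tw (wt c) := by
    intro c
    exact Finset.sum_congr rfl fun r _ => by rw [Cert.prod_eq]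
  -- nonnegativity of character sums over the code
  have charsum : ∀ S : Finset (Fin 48),
      0 ≤ ∑ c : ↥C, Cert.chi (∑ i ∈ S, (c : Fin 48 → ZMod 2) i) := by
    intro S
    by_cases hall : ∀ c : ↥C, (∑ i ∈ S, (c : Fin 48 → ZMod 2) i) = 0
    · have h1 : ∀ c : ↥C, Cert.chi (∑ i ∈ S, (c : Fin 48 → ZMod 2) i) = 1 := by
        intro c; rw [hall c]; rfl
      rw [Finset.sum_congr rfl fun c _ => h1 c]
      simp
    · push_neg at hall
      obtain ⟨c0, hc0⟩ := hall
      have hc0' : (∑ i ∈ S, (c0 : Fin 48 → ZMod 2) i) = 1 :=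
        Cert.ne_zero_eq_one _ hc0
      have hre : ∑ c : ↥C, Cert.chi (∑ i ∈ S, (c : Fin 48 → ZMod 2) i)
          = ∑ c : ↥C, -Cert.chi (∑ i ∈ S, (c : Fin 48 → ZMod 2) i) := by
        rw [← Equiv.sum_comp (Equiv.addRight c0)
          (fun c : ↥C => Cert.chi (∑ i ∈ S, (c : Fin 48 → ZMod 2) i))]
        refine Finset.sum_congr rfl fun c _ => ?_
        have : (∑ i ∈ S, ((Equiv.addRight c0) c : Fin 48 → ZMod 2) i)
            = (∑ i ∈ S, (c : Fin 48 → ZMod 2) i) + 1 := by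
          rw [← hc0', ← Finset.sum_add_distrib]
          rfl
        rw [this, Cert.chi_succ _]
      have : ∑ c : ↥C, Cert.chi (∑ i ∈ S, (c : Fin 48 → ZMod 2) i) = 0 := by
        rw [Finset.sum_neg_distrib] at hre
        linarith
      rw [this]
  -- main nonnegativity via MacWilliams-type expansion
  have hnonneg : 0 ≤ ∑ c : ↥C, G ↑c := by
    have hrw : ∀ c : Fin 48 → ZMod 2,
        G c = ∑ S ∈ (Finset.univ : Finset (Fin 48)).powerset,
          Cert.q S.card * Cert.chi (∑ i ∈ S, c i) := by
      intro c
      calc G c = ∑ r, ∑ S ∈ (Finset.univ : Finset (Fin 48)).powerset,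
            Cert.lam r * (32 ^ (48 - S.card) * Cert.bv r ^ S.card * Cert.chi (∑ i ∈ S, c i)) := by
            refine Finset.sum_congr rfl fun r _ => ?_
            rw [Cert.expand, Finset.mul_sum]
        _ = ∑ S ∈ (Finset.univ : Finset (Fin 48)).powerset,
            ∑ r, Cert.lam r * (32 ^ (48 - S.card) * Cert.bv r ^ S.card * Cert.chi (∑ i ∈ S, c i)) :=
            Finset.sum_comm
        _ = ∑ S ∈ (Finset.univ : Finset (Fin 48)).powerset,
            Cert.q S.card * Cert.chi (∑ i ∈ S, c i) := by
            refine Finset.sum_congr rfl fun S _ => ?_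
            rw [Cert.q, Finset.sum_mul]
            exact Finset.sum_congr rfl fun r _ => by ring
    have h1 : ∑ c : ↥C, G ↑c = ∑ c : ↥C, ∑ S ∈ (Finset.univ : Finset (Fin 48)).powerset,
        Cert.q S.card * Cert.chi (∑ i ∈ S, (c : Fin 48 → ZMod 2) i) :=
      Finset.sum_congr rfl fun c _ => hrw ↑c
    rw [h1, Finset.sum_comm]
    refine Finset.sum_nonneg fun S _ => ?_
    rw [← Finset.mul_sum]
    exact mul_nonneg (qnn S.card (by simpa using Finset.card_le_univ S)) (charsum S)
  -- splitting off 0 and the all-one vector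
  set z : ↥C := 0 with hz
  set o : ↥C := ⟨fun _ => (1 : ZMod 2), hone⟩ with ho
  have hzo : o ≠ z := by
    intro h
    have h2 : (1 : ZMod 2) = 0 := by
      simpa [ho, hz] using congrFun (congrArg Subtype.val h) 0
    exact one_ne_zero h2
  have hsplit : ∑ c : ↥C, G ↑c
      = ∑ c ∈ (Finset.univ.erase z).erase o, G ↑c + G ↑o + G ↑z := by
    rw [Finset.sum_erase_add _ _ (Finset.mem_erase.mpr ⟨hzo, Finset.mem_univ o⟩),
      Finset.sum_erase_add _ _ (Finset.mem_univ z)]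
  have hcard : Fintype.card ↥C = 131072 := by
    have h := Module.card_eq_pow_finrank (K := ZMod 2) (V := ↥C)
    rw [ZMod.card, hrank] at h
    norm_num at h
    exact h
  have hscard : ((Finset.univ.erase z).erase o).card = 131070 := by
    rw [Finset.card_erase_of_mem (Finset.mem_erase.mpr ⟨hzo, Finset.mem_univ o⟩),
      Finset.card_erase_of_mem (Finset.mem_univ z), Finset.card_univ, hcard]
  have hbound : ∀ c ∈ (Finset.univ.erase z).erase o, G ↑c ≤ -D := by
    intro c hc
    have hco : c ≠ o := (Finset.mem_erase.mp hc).1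
    have hcz : c ≠ z := (Finset.mem_erase.mp (Finset.mem_erase.mp hc).2).1
    have hc0 : (c : Fin 48 → ZMod 2) ≠ 0 := by
      intro h; exact hcz (Subtype.ext h)
    have hw := hwt ↑c c.2 hc0
    simp only [Set.mem_insert_iff, Set.mem_singleton_iff] at hw
    have hw48 : wt (c : Fin 48 → ZMod 2) ≠ 48 := by
      intro h48
      apply hco
      apply Subtype.ext
      funext i
      have huniv : Finset.univ.filter (fun i => (c : Fin 48 → ZMod 2) i ≠ 0)
          = Finset.univ := by
        apply (Finset.card_eq_iff_eq_univ _).mp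
        rw [show (Finset.univ.filter fun i => (c : Fin 48 → ZMod 2) i ≠ 0).card
          = wt (c : Fin 48 → ZMod 2) from rfl, h48]
        simp
      have hin : i ∈ Finset.univ.filter (fun i => (c : Fin 48 → ZMod 2) i ≠ 0) := by
        rw [huniv]; exact Finset.mem_univ i
      exact Cert.ne_zero_eq_one _ (Finset.mem_filter.mp hin).2
    rw [hGT]
    rcases hw with h | h | h | h | h | h
    · rw [h]; exact T16
    · rw [h]; exact T20
    · rw [h]; exact T24
    · rw [h]; exact T28
    · rw [h]; exact T32
    · exact absurd h hw48
  have hsum_le : ∑ c ∈ (Finset.univ.erase z).erase o, G ↑c ≤ 131070 * (-D) := by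
    have := Finset.sum_le_card_nsmul ((Finset.univ.erase z).erase o)
      (fun c => G ↑c) (-D) hbound
    rwa [hscard, nsmul_eq_mul, Nat.cast_ofNat] at this
  have hGz : G ↑z = Cert.Tw 0 := by
    rw [hGT]
    have : wt ((z : ↥C) : Fin 48 → ZMod 2) = 0 := by
      simp [hz, wt]
    rw [this]
  have hGo : G ↑o = Cert.Tw 48 := by
    rw [hGT]
    have : wt ((o : ↥C) : Fin 48 → ZMod 2) = 48 := by
      simp [ho, wt, Finset.filter_true_of_mem]
    rw [this]
  rw [hsplit, hGz, hGo] at hnonneg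
  linarith
end

section
/- There does not exist a binary linear [48,17] code all of whose nonzero codewords have Hamming weight in the set {16, 20, 24, 28, 32, 36}. -/
set_option maxRecDepth 100000


section Stmt2Aux

open Polynomial Finset

private lemma coeff_one_sub_X_pow' (w t : ℕ) :
    ((1 - X : ℤ[X]) ^ w).coeff t = (-1 : ℤ) ^ t * w.choose t := by
  have h : (1 - X : ℤ[X]) = C (-1) * (X + C (-1)) := by
    simp [mul_add, ← C_mul]
    ring
  rw [h, mul_pow, ← C_pow, coeff_C_mul, coeff_X_add_C_pow]
  rcases le_or_gt t w with hle | hlt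
  · have h2 : (-1 : ℤ) ^ w * (-1 : ℤ) ^ (w - t) = (-1) ^ t := by
      rw [← pow_add]
      have h3 : w + (w - t) = 2 * (w - t) + t := by omega
      rw [h3, pow_add, pow_mul]
      norm_num
    rw [← mul_assoc, h2]
  · rw [Nat.choose_eq_zero_of_lt hlt]
    simp

/-- Krawtchouk-type coefficient value. -/
private def Kr (j w : ℕ) : ℤ :=
  ∑ t ∈ Finset.range (j + 1), (-1 : ℤ) ^ t * w.choose t * (48 - w).choose (j - t)

private lemma keyCoeff (w j : ℕ) :
    ((1 - X : ℤ[X]) ^ w * (X + 1) ^ (48 - w)).coeff j = Kr j w := by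
  rw [Polynomial.coeff_mul, Finset.Nat.sum_antidiagonal_eq_sum_range_succ_mk]
  refine Finset.sum_congr rfl fun t _ => ?_
  rw [coeff_one_sub_X_pow', coeff_X_add_one_pow, mul_assoc]

private noncomputable def etaZ (c : Fin 48 → ZMod 2) (i : Fin 48) : ℤ :=
  if c i = 0 then 1 else -1

private noncomputable def Ej (j : ℕ) (c : Fin 48 → ZMod 2) : ℤ :=
  ∑ S ∈ Finset.powersetCard j (Finset.univ : Finset (Fin 48)), ∏ i ∈ S, etaZ c i

private lemma prod_eta_eq (c : Fin 48 → ZMod 2) (S : Finset (Fin 48)) :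
    ∏ i ∈ S, etaZ c i = if (∑ i ∈ S, c i) = 0 then 1 else -1 := by
  classical
  have h1 : ∏ i ∈ S, etaZ c i
      = (-1 : ℤ) ^ (S.filter fun i => ¬ c i = 0).card := by
    unfold etaZ
    rw [Finset.prod_ite, Finset.prod_const, Finset.prod_const, one_pow, one_mul]
  have h2 : (∑ i ∈ S, c i) = ((S.filter fun i => ¬ c i = 0).card : ZMod 2) := by
    have : ∀ i ∈ S, c i = if ¬ c i = 0 then 1 else 0 := by
      intro i _
      rcases (by decide : ∀ x : ZMod 2, x = 0 ∨ x = 1) (c i) with h | h <;> simp [h]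
    rw [Finset.sum_congr rfl this, Finset.sum_ite, Finset.sum_const, Finset.sum_const]
    simp
  rw [h1, h2]
  rcases Nat.even_or_odd (S.filter fun i => ¬ c i = 0).card with he | ho
  · rw [he.neg_one_pow, if_pos]
    obtain ⟨k, hk⟩ := he
    push_cast [hk]
    ring_nf
    simp [(by decide : (2 : ZMod 2) = 0)]
  · rw [ho.neg_one_pow, if_neg]
    obtain ⟨k, hk⟩ := ho
    push_cast [hk]
    simp [(by decide : (2 : ZMod 2) = 0)]

private lemma char_nonneg (C : Submodule (ZMod 2) (Fin 48 → ZMod 2))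
    (CF : Finset (Fin 48 → ZMod 2)) (hCF : ∀ c, c ∈ CF ↔ c ∈ C)
    (S : Finset (Fin 48)) : 0 ≤ ∑ c ∈ CF, ∏ i ∈ S, etaZ c i := by
  classical
  have hrw : ∑ c ∈ CF, ∏ i ∈ S, etaZ c i
      = ∑ c ∈ CF, if (∑ i ∈ S, c i) = 0 then (1 : ℤ) else -1 :=
    Finset.sum_congr rfl fun c _ => prod_eta_eq c S
  rw [hrw]
  by_cases hall : ∀ c ∈ CF, (∑ i ∈ S, c i) = 0
  · have : ∑ c ∈ CF, (if (∑ i ∈ S, c i) = 0 then (1 : ℤ) else -1)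
        = ∑ c ∈ CF, (1 : ℤ) :=
      Finset.sum_congr rfl fun c hc => by rw [if_pos (hall c hc)]
    rw [this, Finset.sum_const]
    positivity
  · push_neg at hall
    obtain ⟨c0, hc0m, hc0⟩ := hall
    have hc0' : (∑ i ∈ S, c0 i) = 1 := by
      rcases (by decide : ∀ x : ZMod 2, x = 0 ∨ x = 1) (∑ i ∈ S, c0 i) with h | h
      · exact absurd h hc0
      · exact h
    set f : (Fin 48 → ZMod 2) → ℤ :=
      fun c => if (∑ i ∈ S, c i) = 0 then (1 : ℤ) else -1 with hf
    have hinv : ∀ c : Fin 48 → ZMod 2, c + c0 + c0 = c := by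
      intro c; funext i
      have : ∀ x y : ZMod 2, x + y + y = x := by decide
      simp [this]
    have hmem : ∀ c ∈ CF, c + c0 ∈ CF := by
      intro c hc
      rw [hCF]
      exact C.add_mem ((hCF c).1 hc) ((hCF c0).1 hc0m)
    have hneg : ∀ c : Fin 48 → ZMod 2, f (c + c0) = - f c := by
      intro c
      have hsum : (∑ i ∈ S, (c + c0) i) = (∑ i ∈ S, c i) + 1 := by
        simp only [Pi.add_apply]
        rw [Finset.sum_add_distrib, hc0']
      rcases (by decide : ∀ x : ZMod 2, x = 0 ∨ x = 1) (∑ i ∈ S, c i) with h | h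
      · rw [hf]; simp only [hsum, h]
        norm_num
      · rw [hf]; simp only [hsum, h]
        norm_num [h]
        decide
    have hkey : ∑ c ∈ CF, f c = ∑ c ∈ CF, f (c + c0) := by
      refine (Finset.sum_nbij' (fun c => c + c0) (fun c => c + c0) ?_ ?_ ?_ ?_ ?_).symm
      · intro a ha; exact hmem a ha
      · intro a ha; exact hmem a ha
      · intro a _; exact hinv a
      · intro a _; exact hinv a
      · intro a _; rfl
    have h0 : ∑ c ∈ CF, f c = - ∑ c ∈ CF, f c := by
      nth_rewrite 1 [hkey]
      rw [Finset.sum_congr rfl fun c _ => hneg c]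
      exact Finset.sum_neg_distrib f
    linarith

private lemma Ej_eq (j : ℕ) (c : Fin 48 → ZMod 2) :
    Ej j c = ((1 - X : ℤ[X]) ^ (wt c) * (X + 1) ^ (48 - wt c)).coeff j := by
  classical
  have hprod : ∏ i : Fin 48, (Polynomial.C (etaZ c i) * X + 1)
      = (1 - X : ℤ[X]) ^ (wt c) * (X + 1) ^ (48 - wt c) := by
    rw [← Finset.prod_filter_mul_prod_filter_not Finset.univ (fun i => c i ≠ 0)]
    have e1 : ∀ i ∈ Finset.univ.filter (fun i : Fin 48 => c i ≠ 0),
        Polynomial.C (etaZ c i) * X + 1 = (1 - X : ℤ[X]) := by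
      intro i hi
      rw [Finset.mem_filter] at hi
      unfold etaZ
      rw [if_neg hi.2]
      simp
      ring
    have e2 : ∀ i ∈ Finset.univ.filter (fun i : Fin 48 => ¬ c i ≠ 0),
        Polynomial.C (etaZ c i) * X + 1 = (X + 1 : ℤ[X]) := by
      intro i hi
      rw [Finset.mem_filter] at hi
      unfold etaZ
      rw [if_pos (not_not.mp hi.2)]
      simp
    rw [Finset.prod_congr rfl e1, Finset.prod_congr rfl e2,
      Finset.prod_const, Finset.prod_const]
    have hpos : (Finset.univ.filter (fun i : Fin 48 => c i ≠ 0)).card = wt c := by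
      unfold wt
      congr 1
    have hneg : (Finset.univ.filter (fun i : Fin 48 => ¬ c i ≠ 0)).card = 48 - wt c := by
      have h48 := Finset.card_filter_add_card_filter_not
        (s := (Finset.univ : Finset (Fin 48))) (p := fun i : Fin 48 => c i ≠ 0)
      simp only [Finset.card_univ, Fintype.card_fin] at h48
      omega
    rw [hpos, hneg]
  have hexp : ∏ i : Fin 48, (Polynomial.C (etaZ c i) * X + 1)
      = ∑ S ∈ (Finset.univ : Finset (Fin 48)).powerset,
          Polynomial.C (∏ i ∈ S, etaZ c i) * X ^ S.card := by
    rw [Finset.prod_add]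
    refine Finset.sum_congr rfl fun S _ => ?_
    rw [Finset.prod_const, Finset.prod_mul_distrib, Finset.prod_const, map_prod]
    ring
  have hco : (∑ S ∈ (Finset.univ : Finset (Fin 48)).powerset,
      Polynomial.C (∏ i ∈ S, etaZ c i) * X ^ S.card).coeff j = Ej j c := by
    rw [Polynomial.finset_sum_coeff]
    have : ∀ S ∈ (Finset.univ : Finset (Fin 48)).powerset,
        (Polynomial.C (∏ i ∈ S, etaZ c i) * X ^ S.card).coeff j
          = if S.card = j then ∏ i ∈ S, etaZ c i else 0 := by
      intro S _
      rw [Polynomial.coeff_C_mul, Polynomial.coeff_X_pow]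
      by_cases h : S.card = j <;> simp [h]
      intro h'
      exact absurd h'.symm h
    rw [Finset.sum_congr rfl this, Finset.sum_ite, Finset.sum_const, smul_zero, add_zero]
    unfold Ej
    rw [Finset.powersetCard_eq_filter]
  rw [← hco, ← hexp, hprod]

private lemma Ej_val (j : ℕ) (c : Fin 48 → ZMod 2) : Ej j c = Kr j (wt c) := by
  rw [Ej_eq, keyCoeff]

/-- The certificate combination. -/
private noncomputable def G (c : Fin 48 → ZMod 2) : ℤ :=
  136 * Ej 1 c + 65 * Ej 2 c + 28 * Ej 3 c + 12 * Ej 4 c + 4 * Ej 5 c + Ej 6 c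

private lemma G_val (c : Fin 48 → ZMod 2) :
    G c = 136 * Kr 1 (wt c) + 65 * Kr 2 (wt c) + 28 * Kr 3 (wt c)
      + 12 * Kr 4 (wt c) + 4 * Kr 5 (wt c) + Kr 6 (wt c) := by
  unfold G
  rw [Ej_val, Ej_val, Ej_val, Ej_val, Ej_val, Ej_val]

private lemma Gtable : ∀ w ∈ ({16, 20, 24, 28, 32, 36} : Set ℕ),
    136 * Kr 1 w + 65 * Kr 2 w + 28 * Kr 3 w
      + 12 * Kr 4 w + 4 * Kr 5 w + Kr 6 w = -272 := by
  intro w hw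
  simp only [Set.mem_insert_iff, Set.mem_singleton_iff] at hw
  rcases hw with rfl | rfl | rfl | rfl | rfl | rfl <;> decide

end Stmt2Aux

/-- There is no binary [48,17] code all of whose nonzero codewords have
weight in {16, 20, 24, 28, 32, 36}. -/
theorem stmt_2 :
    ¬ ∃ C : Submodule (ZMod 2) (Fin 48 → ZMod 2),
      Module.finrank (ZMod 2) C = 17 ∧
      ∀ c ∈ C, c ≠ 0 → wt c ∈ ({16, 20, 24, 28, 32, 36} : Set ℕ) := by
  classical
  rintro ⟨C, hrank, hwC⟩
  set CF : Finset (Fin 48 → ZMod 2) := Finset.univ.filter (fun c => c ∈ C) with hCFdef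
  have hCF : ∀ c, c ∈ CF ↔ c ∈ C := by
    intro c
    simp [hCFdef]
  haveI : Fintype C := Fintype.ofFinite C
  have h17 : Fintype.card C = 2 ^ 17 := by
    rw [Module.card_eq_pow_finrank (K := ZMod 2), hrank, ZMod.card]
  have hcard : CF.card = 2 ^ 17 := by
    rw [← h17]
    exact (Fintype.card_of_subtype CF hCF).symm
  have hM : ∀ j : ℕ, 0 ≤ ∑ c ∈ CF, Ej j c := by
    intro j
    unfold Ej
    rw [Finset.sum_comm]
    exact Finset.sum_nonneg fun S _ => char_nonneg C CF hCF S
  have hG : 0 ≤ ∑ c ∈ CF, G c := by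
    have hexp : ∑ c ∈ CF, G c
        = 136 * (∑ c ∈ CF, Ej 1 c) + 65 * (∑ c ∈ CF, Ej 2 c)
          + 28 * (∑ c ∈ CF, Ej 3 c) + 12 * (∑ c ∈ CF, Ej 4 c)
          + 4 * (∑ c ∈ CF, Ej 5 c) + (∑ c ∈ CF, Ej 6 c) := by
      unfold G
      rw [Finset.sum_add_distrib, Finset.sum_add_distrib, Finset.sum_add_distrib,
        Finset.sum_add_distrib, Finset.sum_add_distrib,
        ← Finset.mul_sum, ← Finset.mul_sum, ← Finset.mul_sum, ← Finset.mul_sum,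
        ← Finset.mul_sum]
    rw [hexp]
    have h1 := hM 1
    have h2 := hM 2
    have h3 := hM 3
    have h4 := hM 4
    have h5 := hM 5
    have h6 := hM 6
    linarith
  have h0mem : (0 : Fin 48 → ZMod 2) ∈ CF := (hCF 0).2 C.zero_mem
  have hsplit : ∑ c ∈ CF, G c = G 0 + ∑ c ∈ CF.erase 0, G c :=
    (Finset.add_sum_erase CF G h0mem).symm
  have hwt0 : wt (0 : Fin 48 → ZMod 2) = 0 := by
    simp [wt]
  have hG0 : G (0 : Fin 48 → ZMod 2) = 22019824 := by
    rw [G_val, hwt0]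
    decide
  have herase : ∀ c ∈ CF.erase 0, G c = -272 := by
    intro c hc
    obtain ⟨hne, hcm⟩ := Finset.mem_erase.mp hc
    have hw := hwC c ((hCF c).1 hcm) hne
    rw [G_val]
    exact Gtable (wt c) hw
  have hsum : ∑ c ∈ CF.erase 0, G c = ((2 : ℤ) ^ 17 - 1) * (-272) := by
    rw [Finset.sum_congr rfl herase, Finset.sum_const, Finset.card_erase_of_mem h0mem,
      hcard]
    norm_num
  rw [hsplit, hG0, hsum] at hG
  norm_num at hG
end

section
/- Let C be a binary linear code of length 48 and dimension 10 that contains the all-one vector, and suppose every nonzero codeword of C has weight in {20, 28, 48}. Then no such C exists; in particular, any self-complementary [48,10,20] code with doubly-even weights must contain a codeword of weight 24. -/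
/-- sign character -/
def chi (z : ZMod 2) : ℤ := if z = 0 then 1 else -1

lemma chi_add (a b : ZMod 2) : chi (a + b) = chi a * chi b := by
  revert a b; decide

lemma charSum_dvd {G : Type*} [AddCommGroup G] [Fintype G] (φ : G →+ ZMod 2) :
    (Fintype.card G : ℤ) ∣ ∑ g, chi (φ g) := by
  by_cases h : ∀ g, φ g = 0
  · have : ∑ g, chi (φ g) = (Fintype.card G : ℤ) := by
      simp [h, chi, Finset.card_univ]
    rw [this]
  · push_neg at h
    obtain ⟨g₀, hg₀⟩ := h
    have h1 : φ g₀ = 1 := by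
      have : ∀ a : ZMod 2, a ≠ 0 → a = 1 := by decide
      exact this _ hg₀
    have hS : ∑ g, chi (φ g) = -∑ g, chi (φ g) := by
      calc ∑ g, chi (φ g) = ∑ g, chi (φ (g + g₀)) :=
            (Fintype.sum_equiv (Equiv.addRight g₀) (fun g => chi (φ (g + g₀)))
              (fun g => chi (φ g)) (fun g => rfl)).symm
        _ = ∑ g, chi (φ g) * chi (φ g₀) := by
            simp only [map_add, chi_add]
        _ = -∑ g, chi (φ g) := by
            rw [h1]; simp [chi, Finset.sum_neg_distrib]
    have hz : ∑ g, chi (φ g) = 0 := by omega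
    rw [hz]
    exact dvd_zero _

lemma chi_sum_eq {n : ℕ} (c : Fin n → ZMod 2) :
    ∑ i, chi (c i) = (n : ℤ) - 2 * (wt c : ℤ) := by
  have hpt : ∀ i, chi (c i) = 1 - 2 * (if c i ≠ 0 then (1:ℤ) else 0) := by
    intro i; by_cases h : c i = 0 <;> simp [chi, h]
  rw [Finset.sum_congr rfl (fun i _ => hpt i), Finset.sum_sub_distrib,
    Finset.sum_const, ← Finset.mul_sum, Finset.sum_boole]
  simp [wt, Finset.card_univ]

lemma wt_eq_n {n : ℕ} (c : Fin n → ZMod 2) (h : wt c = n) : c = fun _ => 1 := by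
  have hu : (Finset.univ.filter fun i => c i ≠ 0) = Finset.univ := by
    apply Finset.eq_univ_of_card
    simpa [wt] using h
  funext i
  have : c i ≠ 0 := by
    have := Finset.eq_univ_iff_forall.mp hu i
    simpa using this
  have h2 : ∀ a : ZMod 2, a ≠ 0 → a = 1 := by decide
  exact h2 _ this

lemma wt_compl {n : ℕ} (c : Fin n → ZMod 2) :
    wt (c + fun _ => 1) = n - wt c := by
  have hf : (Finset.univ.filter fun i => ((c + fun _ => 1) : Fin n → ZMod 2) i ≠ 0)
      = Finset.univ.filter fun i => ¬ (c i ≠ 0) := by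
    apply Finset.filter_congr
    intro i _
    have h2 : ∀ a : ZMod 2, (a + 1 ≠ 0 ↔ ¬ a ≠ 0) := by decide
    simpa using h2 (c i)
  have hsum := Finset.card_filter_add_card_filter_not
    (s := (Finset.univ : Finset (Fin n))) (p := fun i => c i ≠ 0)
  simp only [Finset.card_univ, Fintype.card_fin] at hsum
  unfold wt
  rw [hf]
  unfold wt at *
  omega

lemma wt_zero {n : ℕ} : wt (0 : Fin n → ZMod 2) = 0 := by simp [wt]

lemma wt_allone {n : ℕ} : wt (fun _ => (1 : ZMod 2) : Fin n → ZMod 2) = n := by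
  simp [wt]

lemma sq_expand (c : Fin 48 → ZMod 2) :
    ((48:ℤ) - 2 * (wt c : ℤ))^2 = ∑ i, ∑ j, chi (c i + c j) := by
  have h := chi_sum_eq c
  norm_num at h
  rw [← h, sq, Finset.sum_mul_sum]
  exact Finset.sum_congr rfl fun i _ => Finset.sum_congr rfl fun j _ => (chi_add _ _).symm

lemma no_code :
    ¬ ∃ C : Submodule (ZMod 2) (Fin 48 → ZMod 2),
      Module.finrank (ZMod 2) C = 10 ∧ (fun _ => (1 : ZMod 2)) ∈ C ∧
      ∀ c ∈ C, c ≠ 0 → wt c ∈ ({20, 28, 48} : Set ℕ) := by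
  rintro ⟨C, hrank, hone, hwts⟩
  haveI : Fintype C := Fintype.ofFinite C
  have hcard : Fintype.card C = 1024 := by
    rw [Module.card_eq_pow_finrank (K := ZMod 2), hrank]; rfl
  set S : ℤ := ∑ c : C, ((48:ℤ) - 2 * (wt c.1 : ℤ))^2 with hS
  have hdvd : (1024:ℤ) ∣ S := by
    have hstep : S = ∑ i, ∑ j, ∑ c : C, chi (c.1 i + c.1 j) := by
      rw [hS, Finset.sum_congr rfl (fun c _ => sq_expand c.1), Finset.sum_comm]
      exact Finset.sum_congr rfl fun i _ => Finset.sum_comm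
    rw [hstep]
    apply Finset.dvd_sum; intro i _
    apply Finset.dvd_sum; intro j _
    have h := charSum_dvd (AddMonoidHom.mk' (fun c : C => c.1 i + c.1 j)
      (by
        intro a b
        show (a.1 + b.1) i + (a.1 + b.1) j = (a.1 i + a.1 j) + (b.1 i + b.1 j)
        simp only [Pi.add_apply]; ring))
    simp only [AddMonoidHom.mk'_apply] at h
    rw [hcard] at h
    exact_mod_cast h
  have hval : S = 70016 := by
    set one : C := ⟨fun _ => 1, hone⟩ with hone_def
    have hone0 : one ≠ 0 := by
      intro h
      have := congrFun (congrArg Subtype.val h) 0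
      exact one_ne_zero this
    have hterm : ∀ c : C, ((48:ℤ) - 2 * (wt c.1 : ℤ))^2 =
        64 + ((if c = 0 then 2240 else 0) + (if c = one then 2240 else 0)) := by
      intro c
      by_cases h0 : c = 0
      · subst h0
        have h1 : (0 : C) ≠ one := fun h => hone0 h.symm
        simp [wt_zero, if_neg h1]
      · by_cases h1 : c = one
        · subst h1
          have : (one.1 : Fin 48 → ZMod 2) = fun _ => 1 := rfl
          rw [this, wt_allone, if_neg h0]
          norm_num
        · have h0' : c.1 ≠ 0 := by
            intro h; exact h0 (Subtype.ext h)
          have hw := hwts c.1 c.2 h0'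
          simp only [Set.mem_insert_iff, Set.mem_singleton_iff] at hw
          rcases hw with h | h | h
          · rw [h, if_neg h0, if_neg h1]; norm_num
          · rw [h, if_neg h0, if_neg h1]; norm_num
          · exact absurd (Subtype.ext (wt_eq_n c.1 h)) h1
    rw [hS, Finset.sum_congr rfl (fun c _ => hterm c)]
    rw [Finset.sum_add_distrib, Finset.sum_add_distrib, Finset.sum_const,
      Finset.card_univ, hcard]
    simp only [Finset.sum_ite_eq', Finset.mem_univ, if_true]
    norm_num
  rw [hval] at hdvd
  norm_num at hdvd

/-- There is no self-complementary binary [48,10] code whose nonzero codewords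
all have weight in {20, 28, 48}; in particular any self-complementary
doubly-even [48,10,20] code contains a codeword of weight 24. -/
theorem stmt_3 :
    (¬ ∃ C : Submodule (ZMod 2) (Fin 48 → ZMod 2),
      Module.finrank (ZMod 2) C = 10 ∧ (fun _ => (1 : ZMod 2)) ∈ C ∧
      ∀ c ∈ C, c ≠ 0 → wt c ∈ ({20, 28, 48} : Set ℕ)) ∧
    ∀ C : Submodule (ZMod 2) (Fin 48 → ZMod 2),
      Module.finrank (ZMod 2) C = 10 → (fun _ => (1 : ZMod 2)) ∈ C →
      minDist C = 20 → (∀ c ∈ C, 4 ∣ wt c) → ∃ c ∈ C, wt c = 24 := by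
  have key := no_code
  refine ⟨key, ?_⟩
  intro C hrank hone hmin hdiv
  by_contra hno
  push_neg at hno
  apply key
  refine ⟨C, hrank, hone, ?_⟩
  intro c hc hc0
  have h4 := hdiv c hc
  have hle : wt c ≤ 48 := by
    have := Finset.card_filter_le (Finset.univ : Finset (Fin 48)) (fun i => c i ≠ 0)
    simpa [wt] using this
  have hmin' : sInf {w | ∃ c ∈ C, c ≠ 0 ∧ wt c = w} = 20 := hmin
  have hge : 20 ≤ wt c := hmin' ▸ Nat.sInf_le ⟨c, hc, hc0, rfl⟩
  have h24 := hno c hc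
  have hcomp : wt c = 48 ∨ wt c ≤ 28 := by
    by_cases hcw : wt c = 48
    · exact Or.inl hcw
    · right
      have hc' : (c + fun _ => 1) ∈ C := C.add_mem hc hone
      have hw' : wt ((c + fun _ => 1) : Fin 48 → ZMod 2) = 48 - wt c := wt_compl c
      have hne : ((c + fun _ => 1) : Fin 48 → ZMod 2) ≠ 0 := by
        intro hz
        rw [hz, wt_zero] at hw'
        omega
      have hge' : 20 ≤ wt ((c + fun _ => 1) : Fin 48 → ZMod 2) :=
        hmin' ▸ Nat.sInf_le ⟨_, hc', hne, rfl⟩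
      omega
  simp only [Set.mem_insert_iff, Set.mem_singleton_iff]
  omega
end

section
/- If C is a self-complementary binary linear [48,10] code with minimum distance 20, every nonzero codeword weight in {20, 24, 28, 48}, and whose dual has minimum distance at least 3 (and at least 6 in even positions, i.e., A₂^⊥ = 0), then the weight distribution of C is uniquely determined: A₀ = 1, A₂₀ = 348, A₂₄ = 326, A₂₈ = 348, A₄₈ = 1. -/
open Finset

set_option maxRecDepth 8000

private def eps (a : ZMod 2) : ℤ := if a = 0 then 1 else -1

private lemma eps_add (a b : ZMod 2) : eps (a + b) = eps a * eps b := by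
  fin_cases a <;> fin_cases b <;> decide

private lemma charSum {n : ℕ} (C : Submodule (ZMod 2) (Fin n → ZMod 2))
    [DecidablePred (· ∈ C)]
    (φ : (Fin n → ZMod 2) → ZMod 2)
    (hadd : ∀ a b, φ (a + b) = φ a + φ b)
    (h : ∃ c₀ ∈ C, φ c₀ = 1) :
    ∑ c ∈ univ.filter (· ∈ C), eps (φ c) = 0 := by
  obtain ⟨c₀, hc₀, hφ⟩ := h
  have hzero : c₀ + c₀ = 0 := by
    funext j; exact CharTwo.add_self_eq_zero _
  have hswap : ∑ c ∈ univ.filter (· ∈ C), eps (φ (c + c₀))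
      = ∑ c ∈ univ.filter (· ∈ C), eps (φ c) := by
    apply Finset.sum_equiv (Equiv.addRight c₀)
    · intro i
      simp only [Finset.mem_filter, Finset.mem_univ, true_and, Equiv.coe_addRight]
      constructor
      · intro hi; exact C.add_mem hi hc₀
      · intro hi
        have := C.add_mem hi hc₀
        rwa [add_assoc, hzero, add_zero] at this
    · intro i _; rfl
  have hneg : ∀ c, eps (φ (c + c₀)) = - eps (φ c) := by
    intro c
    rw [hadd, hφ, eps_add]
    have h1 : eps 1 = -1 := by decide
    rw [h1]; ring
  rw [Finset.sum_congr rfl (fun c _ => hneg c), Finset.sum_neg_distrib] at hswap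
  linarith

private lemma sum_eps_coords {n : ℕ} (c : Fin n → ZMod 2) :
    ∑ i, eps (c i) = (n : ℤ) - 2 * (wt c : ℤ) := by
  classical
  have h : ∀ i, eps (c i) = 1 - 2 * (if c i ≠ 0 then (1:ℤ) else 0) := by
    intro i; by_cases h : c i = 0 <;> simp [eps, h]
  rw [Finset.sum_congr rfl (fun i _ => h i)]
  rw [Finset.sum_sub_distrib, ← Finset.mul_sum, Finset.sum_boole, wt]
  simp

private lemma wt_eq_zero_iff {n : ℕ} (c : Fin n → ZMod 2) : wt c = 0 ↔ c = 0 := by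
  classical
  rw [wt, Finset.card_eq_zero, Finset.filter_eq_empty_iff]
  constructor
  · intro h; funext i
    have := h (Finset.mem_univ i)
    simpa using this
  · intro h i _; simp [h]

/-- The weight distribution of a self-complementary [48,10,20] subcode with
weights in {20,24,28,48} and dual distance at least 3 (with no dual words of
weight 2) is uniquely determined. -/
theorem stmt_4 (C : Submodule (ZMod 2) (Fin 48 → ZMod 2))
    (hdim : Module.finrank (ZMod 2) C = 10)
    (hsc : (fun _ => (1 : ZMod 2)) ∈ C)
    (hmin : minDist C = 20)
    (hw : ∀ c ∈ C, c ≠ 0 → wt c ∈ ({20, 24, 28, 48} : Set ℕ))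
    (hd3 : 3 ≤ minDist (dualCode C))
    (hA2 : wtCount (dualCode C) 2 = 0) :
    wtCount C 0 = 1 ∧ wtCount C 20 = 348 ∧ wtCount C 24 = 326 ∧
      wtCount C 28 = 348 ∧ wtCount C 48 = 1 := by
  classical
  set S : Finset (Fin 48 → ZMod 2) := univ.filter (· ∈ C) with hS
  have hC1024 : Nat.card C = 1024 := by
    haveI : Fintype C := Fintype.ofFinite _
    rw [Nat.card_eq_fintype_card, Module.card_eq_pow_finrank (K := ZMod 2), hdim, ZMod.card]
    norm_num
  have hScard : S.card = 1024 := by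
    rw [← hC1024]
    rw [Nat.card_congr (Equiv.subtypeEquivRight
      (q := fun c => c ∈ S) (fun c => by simp [hS]))]
    exact (Nat.card_eq_finsetCard _).symm
  have hwtA : ∀ w, wtCount C w = (S.filter fun c => wt c = w).card := by
    intro w
    rw [wtCount,
      Nat.card_congr (Equiv.subtypeEquivRight
        (q := fun c => c ∈ S.filter fun c => wt c = w)
        (fun c => by simp [hS, Finset.mem_filter]))]
    exact Nat.card_eq_finsetCard _
  -- pair character sums vanish
  have h2 : ∀ i j : Fin 48, i ≠ j → ∑ c ∈ S, eps (c i + c j) = 0 := by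
    intro i j hij
    apply charSum C (fun c => c i + c j)
      (by intro a b; simp only [Pi.add_apply]; ring)
    by_contra hno
    push_neg at hno
    set x : Fin 48 → ZMod 2 := fun k => if k = i ∨ k = j then 1 else 0 with hx
    have hzo : ∀ y : ZMod 2, y ≠ 1 → y = 0 := by decide
    have hmem : x ∈ dualCode C := by
      intro c hc
      have h1 : ∀ k, x k * c k = if k ∈ ({i, j} : Finset (Fin 48)) then c k else 0 := by
        intro k
        by_cases hk : k = i ∨ k = j <;>
          simp [hx, hk, Finset.mem_insert, Finset.mem_singleton] <;> tauto
      rw [Finset.sum_congr rfl (fun k _ => h1 k), Finset.sum_ite_mem,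
        Finset.univ_inter, Finset.sum_pair hij]
      exact hzo _ (hno c hc)
    have hwt2 : wt x = 2 := by
      have hfil : (univ.filter fun k => x k ≠ 0) = {i, j} := by
        ext k
        by_cases hk : k = i ∨ k = j <;>
          simp [hx, hk, Finset.mem_insert, Finset.mem_singleton] <;> tauto
      rw [wt, hfil, Finset.card_pair hij]
    have hpos : wtCount (dualCode C) 2 ≠ 0 := by
      rw [wtCount]
      have hne : Nonempty {c : Fin 48 → ZMod 2 // c ∈ dualCode C ∧ wt c = 2} :=
        ⟨⟨_, hmem, hwt2⟩⟩
      exact Nat.card_pos.ne'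
    exact hpos hA2
  -- the second-moment identity
  have key : ∑ c ∈ S, ((48:ℤ) - 2 * (wt c : ℤ))^2 = 48 * 1024 := by
    have expand : ∀ c : Fin 48 → ZMod 2,
        ((48:ℤ) - 2 * (wt c : ℤ))^2 = ∑ i, ∑ j, eps (c i + c j) := by
      intro c
      have h48 : ((48:ℕ) : ℤ) = (48:ℤ) := by norm_num
      rw [← h48, ← sum_eps_coords, sq, Finset.sum_mul_sum]
      exact Finset.sum_congr rfl fun i _ =>
        Finset.sum_congr rfl fun j _ => (eps_add _ _).symm
    rw [Finset.sum_congr rfl (fun c _ => expand c)]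
    rw [Finset.sum_comm]
    have hrow : ∀ i : Fin 48, ∑ c ∈ S, ∑ j, eps (c i + c j) = 1024 := by
      intro i
      rw [Finset.sum_comm]
      have hj : ∀ j : Fin 48, ∑ c ∈ S, eps (c i + c j)
          = if j = i then 1024 else 0 := by
        intro j
        by_cases hji : j = i
        · subst hji
          have h1 : ∀ c : Fin 48 → ZMod 2, eps (c j + c j) = 1 := by
            intro c
            have h0 : c j + c j = 0 := CharTwo.add_self_eq_zero _
            rw [h0]; rfl
          rw [Finset.sum_congr rfl (fun c _ => h1 c), Finset.sum_const, hScard]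
          simp
        · rw [h2 i j (fun h => hji h.symm)]
          simp [hji]
      rw [Finset.sum_congr rfl (fun j _ => hj j)]
      simp
    rw [Finset.sum_congr rfl (fun i _ => hrow i)]
    simp
  -- decompose by weight
  have hmaps : ∀ c ∈ S, wt c ∈ ({0, 20, 24, 28, 48} : Finset ℕ) := by
    intro c hc
    have hcC : c ∈ C := by simpa [hS] using hc
    by_cases h0 : c = 0
    · simp [h0, (wt_eq_zero_iff (0 : Fin 48 → ZMod 2)).mpr rfl]
    · have := hw c hcC h0
      simp only [Set.mem_insert_iff, Set.mem_singleton_iff] at this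
      simp [this]
  have hcards : (S.filter fun c => wt c = 0).card + (S.filter fun c => wt c = 20).card
      + (S.filter fun c => wt c = 24).card + (S.filter fun c => wt c = 28).card
      + (S.filter fun c => wt c = 48).card = 1024 := by
    have h := Finset.card_eq_sum_card_fiberwise hmaps
    rw [hScard] at h
    rw [show ({0, 20, 24, 28, 48} : Finset ℕ)
        = insert 0 (insert 20 (insert 24 (insert 28 {48}))) from rfl] at h
    rw [Finset.sum_insert (by decide), Finset.sum_insert (by decide),
      Finset.sum_insert (by decide), Finset.sum_insert (by decide),
      Finset.sum_singleton] at h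
    omega
  have hmom : 2304 * ((S.filter fun c => wt c = 0).card : ℤ)
      + 64 * ((S.filter fun c => wt c = 20).card : ℤ)
      + 64 * ((S.filter fun c => wt c = 28).card : ℤ)
      + 2304 * ((S.filter fun c => wt c = 48).card : ℤ) = 49152 := by
    have hfib := Finset.sum_fiberwise_of_maps_to hmaps
      (fun c => ((48:ℤ) - 2 * (wt c : ℤ))^2)
    rw [key] at hfib
    have inner : ∀ w : ℕ, ∑ c ∈ S.filter (fun c => wt c = w),
        ((48:ℤ) - 2 * (wt c : ℤ))^2
        = ((S.filter fun c => wt c = w).card : ℤ) * ((48:ℤ) - 2 * w)^2 := by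
      intro w
      rw [Finset.sum_congr rfl (fun c hc => by
        rw [(Finset.mem_filter.mp hc).2]), Finset.sum_const, nsmul_eq_mul]
    rw [show ({0, 20, 24, 28, 48} : Finset ℕ)
        = insert 0 (insert 20 (insert 24 (insert 28 {48}))) from rfl] at hfib
    rw [Finset.sum_insert (by decide), Finset.sum_insert (by decide),
      Finset.sum_insert (by decide), Finset.sum_insert (by decide),
      Finset.sum_singleton, inner, inner, inner, inner, inner] at hfib
    push_cast at hfib ⊢
    linarith
  -- A 0 = 1
  have hA0 : (S.filter fun c => wt c = 0).card = 1 := by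
    have h : S.filter (fun c => wt c = 0) = {0} := by
      ext c
      simp only [Finset.mem_filter, hS, Finset.mem_univ, true_and,
        Finset.mem_singleton, wt_eq_zero_iff]
      exact ⟨fun h => h.2, fun h => ⟨by simp [h, C.zero_mem], h⟩⟩
    rw [h, Finset.card_singleton]
  -- A 48 = 1
  have hones : ∀ c : Fin 48 → ZMod 2, wt c = 48 ↔ c = fun _ => 1 := by
    intro c
    constructor
    · intro h
      have huniv : (univ.filter fun i => c i ≠ 0) = univ :=
        Finset.eq_univ_of_card _ (by simpa [Fintype.card_fin, wt] using h)
      funext i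
      have hne : c i ≠ 0 := by
        have := Finset.mem_filter.mp (huniv ▸ Finset.mem_univ i)
        exact this.2
      revert hne
      have h1 : ∀ y : ZMod 2, y ≠ 0 → y = 1 := by decide
      exact h1 (c i)
    · intro h
      rw [h, wt]
      simp
  have hA48 : (S.filter fun c => wt c = 48).card = 1 := by
    have h : S.filter (fun c => wt c = 48) = {fun _ => 1} := by
      ext c
      simp only [Finset.mem_filter, hS, Finset.mem_univ, true_and,
        Finset.mem_singleton, hones]
      exact ⟨fun h => h.2, fun h => ⟨by rw [h]; exact hsc, h⟩⟩
    rw [h, Finset.card_singleton]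
  -- A 20 = A 28 by complementation
  have hcompl : ∀ c : Fin 48 → ZMod 2,
      wt (c + fun _ => (1 : ZMod 2)) = 48 - wt c := by
    intro c
    have hz : ∀ y : ZMod 2, (y + 1 ≠ 0) ↔ ¬ (y ≠ 0) := by decide
    have h : (univ.filter fun i => ((c + fun _ => (1 : ZMod 2)) : Fin 48 → ZMod 2) i ≠ 0)
        = univ.filter fun i => ¬ (c i ≠ 0) := by
      ext i
      simp only [Finset.mem_filter, Finset.mem_univ, true_and, Pi.add_apply]
      exact hz (c i)
    rw [wt, h, Finset.filter_not, Finset.card_sdiff_of_subset (Finset.filter_subset _ _)]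
    simp [wt]
  have hinv : ∀ c : Fin 48 → ZMod 2,
      (c + fun _ => (1 : ZMod 2)) + (fun _ => (1 : ZMod 2)) = c := by
    intro c
    funext i
    have h11 : (1 : ZMod 2) + 1 = 0 := by decide
    simp [add_assoc, h11]
  have hA2028 : (S.filter fun c => wt c = 20).card
      = (S.filter fun c => wt c = 28).card := by
    apply Finset.card_nbij' (fun c => c + fun _ => (1 : ZMod 2))
      (fun c => c + fun _ => (1 : ZMod 2))
    · intro c hc
      obtain ⟨hcS, hcw⟩ := Finset.mem_filter.mp hc
      have hcC : c ∈ C := by simpa [hS] using hcS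
      refine Finset.mem_filter.mpr ⟨by simp [hS]; exact C.add_mem hcC hsc, ?_⟩
      rw [hcompl, hcw]
    · intro c hc
      obtain ⟨hcS, hcw⟩ := Finset.mem_filter.mp hc
      have hcC : c ∈ C := by simpa [hS] using hcS
      refine Finset.mem_filter.mpr ⟨by simp [hS]; exact C.add_mem hcC hsc, ?_⟩
      rw [hcompl, hcw]
    · intro c _; exact hinv c
    · intro c _; exact hinv c
  refine ⟨?_, ?_, ?_, ?_, ?_⟩ <;> rw [hwtA] <;> omega
end

section
/- Up to permutation equivalence, there is a unique binary linear [28,3] code all of whose nonzero codewords have Hamming weight exactly 16. -/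


abbrev V3 := Fin 3 → ZMod 2

def Lmap (G : Fin 28 → V3) : (Fin 3 → ZMod 2) →ₗ[ZMod 2] (Fin 28 → ZMod 2) where
  toFun c := fun i => ∑ j, c j * G i j
  map_add' := by intro x y; funext i; simp [add_mul, Finset.sum_add_distrib]
  map_smul' := by intro r x; funext i; simp [Finset.mul_sum, mul_assoc]

lemma sumV (f : V3 → ℕ) :
    ∑ v, f v = f ![0,0,0] + f ![0,0,1] + f ![0,1,0] + f ![0,1,1]
      + f ![1,0,0] + f ![1,0,1] + f ![1,1,0] + f ![1,1,1] := by
  rw [show (Finset.univ : Finset V3) =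
    {![0,0,0], ![0,0,1], ![0,1,0], ![0,1,1], ![1,0,0], ![1,0,1], ![1,1,0], ![1,1,1]} from by decide]
  rw [Finset.sum_insert (by decide), Finset.sum_insert (by decide), Finset.sum_insert (by decide),
    Finset.sum_insert (by decide), Finset.sum_insert (by decide), Finset.sum_insert (by decide),
    Finset.sum_insert (by decide), Finset.sum_singleton]
  ring

lemma fiber_count (G : Fin 28 → V3)
    (h : ∀ lam : V3, lam ≠ 0 →
      (Finset.univ.filter fun i => (∑ j, lam j * G i j) ≠ 0).card = 16) :
    ∀ v : V3, (Finset.univ.filter fun i => G i = v).card = if v = 0 then 0 else 4 := by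
  classical
  set n : V3 → ℕ := fun v => (Finset.univ.filter fun i => G i = v).card with hn
  have htot : ∑ v : V3, n v = 28 := by
    have := Finset.card_eq_sum_card_fiberwise
      (f := G) (s := Finset.univ) (t := Finset.univ) (fun i _ => Finset.mem_univ _)
    simpa [hn] using this.symm
  have heq : ∀ lam : V3, lam ≠ 0 →
      ∑ v : V3, (if (∑ j, lam j * v j) ≠ 0 then n v else 0) = 16 := by
    intro lam hlam
    have key := Finset.card_eq_sum_card_fiberwise
      (f := G) (s := Finset.univ.filter fun i => (∑ j, lam j * G i j) ≠ 0)
      (t := Finset.univ.filter fun v => (∑ j, lam j * v j) ≠ 0)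
      (by intro i hi; simp only [Finset.coe_filter, Finset.mem_coe, Finset.mem_filter, Finset.mem_univ, true_and, Set.mem_setOf_eq] at hi ⊢; exact hi)
    rw [h lam hlam] at key
    rw [← Finset.sum_filter, key]
    apply Finset.sum_congr rfl
    intro v hv
    simp only [Finset.mem_filter, Finset.mem_univ, true_and] at hv
    have hset : (Finset.filter (fun a => G a = v)
        (Finset.filter (fun i => (∑ j, lam j * G i j) ≠ 0) Finset.univ))
        = Finset.univ.filter fun i => G i = v := by
      ext i
      simp only [Finset.mem_filter, Finset.mem_univ, true_and]
      constructor
      · rintro ⟨_, hg⟩; exact hg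
      · intro hg; exact ⟨by rw [hg]; exact hv, hg⟩
    rw [hset]
  have e1 := heq ![0,0,1] (by decide)
  have e2 := heq ![0,1,0] (by decide)
  have e3 := heq ![0,1,1] (by decide)
  have e4 := heq ![1,0,0] (by decide)
  have e5 := heq ![1,0,1] (by decide)
  have e6 := heq ![1,1,0] (by decide)
  have e7 := heq ![1,1,1] (by decide)
  rw [sumV] at htot e1 e2 e3 e4 e5 e6 e7
  simp only [Fin.sum_univ_three, Matrix.cons_val_zero, Matrix.cons_val_one, Matrix.head_cons,
    Matrix.cons_val_two, Matrix.tail_cons] at e1 e2 e3 e4 e5 e6 e7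
  simp only [zero_mul, one_mul, mul_zero, mul_one, add_zero, zero_add,
    show ((1:ZMod 2)+1 = 0) from by decide, ne_eq, not_true_eq_false, not_false_eq_true,
    if_true, if_false, ite_true, ite_false, one_ne_zero] at e1 e2 e3 e4 e5 e6 e7
  simp only [hn] at htot e1 e2 e3 e4 e5 e6 e7
  intro v
  have hcase : ∀ x : ZMod 2, x = 0 ∨ x = 1 := by decide
  have hv : v = ![v 0, v 1, v 2] := by funext j; fin_cases j <;> rfl
  rcases hcase (v 0) with h0 | h0 <;> rcases hcase (v 1) with h1 | h1 <;>
    rcases hcase (v 2) with h2 | h2 <;> rw [h0, h1, h2] at hv <;> rw [hv] <;>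
    [rw [if_pos (by decide)]; rw [if_neg (by decide)]; rw [if_neg (by decide)];
     rw [if_neg (by decide)]; rw [if_neg (by decide)]; rw [if_neg (by decide)];
     rw [if_neg (by decide)]; rw [if_neg (by decide)]] <;> omega

lemma exists_perm_comp {α β : Type*} [Fintype α] [DecidableEq α] [DecidableEq β]
    (G H : α → β)
    (h : ∀ v, (Finset.univ.filter fun i => G i = v).card
            = (Finset.univ.filter fun i => H i = v).card) :
    ∃ σ : Equiv.Perm α, ∀ i, G (σ i) = H i := by
  have e : ∀ v : β, {i // H i = v} ≃ {i // G i = v} := fun v =>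
    Fintype.equivOfCardEq (by
      rw [Fintype.card_subtype, Fintype.card_subtype]
      exact (h v).symm)
  refine ⟨(Equiv.sigmaFiberEquiv H).symm.trans
    ((Equiv.sigmaCongrRight e).trans (Equiv.sigmaFiberEquiv G)), ?_⟩
  intro i
  simp only [Equiv.trans_apply, Equiv.sigmaFiberEquiv, Equiv.sigmaCongrRight,
    Equiv.coe_fn_symm_mk, Equiv.coe_fn_mk]
  exact (e (H i) ⟨i, rfl⟩).2

lemma code_structure (C : Submodule (ZMod 2) (Fin 28 → ZMod 2))
    (h3 : Module.finrank (ZMod 2) C = 3)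
    (hw : ∀ c ∈ C, c ≠ 0 → wt c = 16) :
    ∃ G : Fin 28 → V3, C = LinearMap.range (Lmap G) ∧
      ∀ lam : V3, lam ≠ 0 →
        (Finset.univ.filter fun i => (∑ j, lam j * G i j) ≠ 0).card = 16 := by
  classical
  let β : Module.Basis (Fin 3) (ZMod 2) C := Module.finBasisOfFinrankEq (ZMod 2) C h3
  set G : Fin 28 → V3 := fun i j => ((β j : C) : Fin 28 → ZMod 2) i with hG
  have hL : ∀ lam : V3, Lmap G lam = ((∑ j, lam j • β j : C) : Fin 28 → ZMod 2) := by
    intro lam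
    funext i
    simp only [Lmap, LinearMap.coe_mk, AddHom.coe_mk, hG]
    rw [AddSubmonoidClass.coe_finset_sum]
    rw [Finset.sum_apply]
    simp [smul_eq_mul]
  have hrange : C = LinearMap.range (Lmap G) := by
    apply le_antisymm
    · intro x hx
      refine ⟨β.equivFun ⟨x, hx⟩, ?_⟩
      rw [hL]
      have := β.sum_equivFun ⟨x, hx⟩
      rw [this]
    · rintro _ ⟨lam, rfl⟩
      rw [hL]
      exact (∑ j, lam j • β j : C).2
  have hinj : ∀ lam : V3, lam ≠ 0 → Lmap G lam ≠ 0 := by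
    intro lam hlam hz
    rw [hL] at hz
    have hzero : (∑ j, lam j • β j : C) = 0 := by
      exact Subtype.ext hz
    have := Fintype.linearIndependent_iff.mp β.linearIndependent lam hzero
    exact hlam (funext this)
  refine ⟨G, hrange, ?_⟩
  intro lam hlam
  have hmem : Lmap G lam ∈ C := hrange ▸ ⟨lam, rfl⟩
  have := hw _ hmem (hinj lam hlam)
  simp [wt, Lmap] at this
  convert this
  exact Finset.filter_congr_decidable _ _ _

def G0 : Fin 28 → V3 := fun i =>
  ![(((i : ℕ) / 4 + 1) / 4 : ℕ), ((((i : ℕ) / 4 + 1) / 2) % 2 : ℕ), (((i : ℕ) / 4 + 1) % 2 : ℕ)]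

lemma hstd : ∀ lam : V3, lam ≠ 0 →
    (Finset.univ.filter fun i => (∑ j, lam j * G0 i j) ≠ 0).card = 16 := by decide

lemma Lmap_ne_zero {G : Fin 28 → V3}
    (h : ∀ lam : V3, lam ≠ 0 →
      (Finset.univ.filter fun i => (∑ j, lam j * G i j) ≠ 0).card = 16)
    {lam : V3} (hlam : lam ≠ 0) : Lmap G lam ≠ 0 := by
  intro hz
  have h16 := h lam hlam
  rw [show (Finset.univ.filter fun i => (∑ j, lam j * G i j) ≠ 0) = ∅ from by
    ext i; simp only [Finset.mem_filter, Finset.mem_univ, true_and, Finset.notMem_empty,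
      iff_false, not_not]
    have := congrFun hz i
    simpa [Lmap] using this] at h16
  simp at h16

lemma range_props {G : Fin 28 → V3}
    (h : ∀ lam : V3, lam ≠ 0 →
      (Finset.univ.filter fun i => (∑ j, lam j * G i j) ≠ 0).card = 16) :
    Module.finrank (ZMod 2) (LinearMap.range (Lmap G)) = 3 ∧
      ∀ c ∈ LinearMap.range (Lmap G), c ≠ 0 → wt c = 16 := by
  have hinj : Function.Injective (Lmap G) := by
    rw [← LinearMap.ker_eq_bot, LinearMap.ker_eq_bot']
    intro lam hz
    by_contra hlam
    exact Lmap_ne_zero h hlam hz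
  constructor
  · rw [LinearMap.finrank_range_of_inj hinj]
    simp
  · rintro _ ⟨lam, rfl⟩ hne
    have hlam : lam ≠ 0 := by rintro rfl; exact hne (map_zero _)
    have := h lam hlam
    simp [wt, Lmap] at this ⊢
    convert this
    exact Finset.filter_congr_decidable _ _ _

/-- Up to permutation equivalence there is a unique binary [28,3] code all of
whose nonzero codewords have weight 16. -/
theorem stmt_7 :
    (∃ C : Submodule (ZMod 2) (Fin 28 → ZMod 2),
      Module.finrank (ZMod 2) C = 3 ∧ ∀ c ∈ C, c ≠ 0 → wt c = 16) ∧
    ∀ C D : Submodule (ZMod 2) (Fin 28 → ZMod 2),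
      Module.finrank (ZMod 2) C = 3 → (∀ c ∈ C, c ≠ 0 → wt c = 16) →
      Module.finrank (ZMod 2) D = 3 → (∀ c ∈ D, c ≠ 0 → wt c = 16) →
      ∃ σ : Equiv.Perm (Fin 28),
        Submodule.map (LinearMap.funLeft (ZMod 2) (ZMod 2) σ) C = D := by
  constructor
  · refine ⟨LinearMap.range (Lmap G0), (range_props hstd).1, (range_props hstd).2⟩
  · intro C D hC3 hCw hD3 hDw
    obtain ⟨G, hCr, hGw⟩ := code_structure C hC3 hCw
    obtain ⟨H, hDr, hHw⟩ := code_structure D hD3 hDw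
    obtain ⟨σ, hσ⟩ := exists_perm_comp G H (by
      intro v
      rw [fiber_count G hGw v, fiber_count H hHw v])
    refine ⟨σ, ?_⟩
    have hcomp : LinearMap.funLeft (ZMod 2) (ZMod 2) σ ∘ₗ Lmap G = Lmap H := by
      apply LinearMap.ext
      intro c
      funext i
      simp only [LinearMap.coe_comp, Function.comp_apply, LinearMap.funLeft_apply, Lmap,
        LinearMap.coe_mk, AddHom.coe_mk, hσ i]
    rw [hCr, hDr, ← hcomp, LinearMap.range_comp]
end

section
/- Let C be an [n,k] binary linear code and suppose that for some index j with 0 < j < k, the j-th entry of the optimum distance profile of C in dictionary order, ODP^dic[C]_j, is the first entry (reading from index k downward) strictly greater than d(C). Then j equals the maximum dimension of a subcode of C with minimum distance ODP^dic[C]_j; i.e., C has no subcode of dimension j+1 with that minimum distance. -/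
/-- A subcode chain `C = D 0 ⊃ D 1 ⊃ ⋯ ⊃ D (k-1)` with `dim (D i) = k - i`. -/
def IsSubcodeChain {n : ℕ} (k : ℕ) (C : Submodule (ZMod 2) (Fin n → ZMod 2))
    (D : ℕ → Submodule (ZMod 2) (Fin n → ZMod 2)) : Prop :=
  D 0 = C ∧ (∀ i < k, Module.finrank (ZMod 2) (D i) = k - i) ∧
    ∀ i, i + 1 < k → D (i + 1) < D i

/-- `a` is an upper bound on `b` in the dictionary order (on the first `k` entries). -/
def DicUB (k : ℕ) (a b : ℕ → ℕ) : Prop :=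
  (∀ i < k, a i = b i) ∨ ∃ t < k, (∀ i < t, a i = b i) ∧ b t < a t

/-- `a` is an upper bound on `b` in the inverse dictionary order (on the first `k` entries). -/
def InvUB (k : ℕ) (a b : ℕ → ℕ) : Prop :=
  (∀ i < k, a i = b i) ∨ ∃ t < k, (∀ i, t < i → i < k → a i = b i) ∧ b t < a t

/-- `p` is the optimum distance profile of `C` in the dictionary order:
it is the distance profile of some subcode chain and an upper bound, in the
dictionary order, on the distance profile of every subcode chain.
(Entries beyond the code's dimension are normalized to `0`.) -/
def IsODPdic {n : ℕ} (k : ℕ) (C : Submodule (ZMod 2) (Fin n → ZMod 2)) (p : ℕ → ℕ) : Prop :=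
  (∃ D, IsSubcodeChain k C D ∧ ∀ i < k, p i = minDist (D i)) ∧
  (∀ i, k ≤ i → p i = 0) ∧
  ∀ D, IsSubcodeChain k C D → DicUB k p (fun i => minDist (D i))

/-- `p` is the optimum distance profile of `C` in the inverse dictionary order. -/
def IsODPinv {n : ℕ} (k : ℕ) (C : Submodule (ZMod 2) (Fin n → ZMod 2)) (p : ℕ → ℕ) : Prop :=
  (∃ D, IsSubcodeChain k C D ∧ ∀ i < k, p i = minDist (D i)) ∧
  (∀ i, k ≤ i → p i = 0) ∧
  ∀ D, IsSubcodeChain k C D → InvUB k p (fun i => minDist (D i))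

/-! ### Auxiliary lemmas -/

theorem aux_step_up {n : ℕ} (A B : Submodule (ZMod 2) (Fin n → ZMod 2)) (hle : A ≤ B)
    (hlt : Module.finrank (ZMod 2) A < Module.finrank (ZMod 2) B) :
    ∃ A' : Submodule (ZMod 2) (Fin n → ZMod 2),
      A < A' ∧ A' ≤ B ∧ Module.finrank (ZMod 2) A' = Module.finrank (ZMod 2) A + 1 := by
  have hAB : A < B := lt_of_le_of_ne hle (by rintro rfl; exact lt_irrefl _ hlt)
  obtain ⟨x, hxB, hxA⟩ := SetLike.exists_of_lt hAB
  have hx0 : x ≠ 0 := fun h => hxA (h ▸ A.zero_mem)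
  have hxmem : x ∈ A ⊔ Submodule.span (ZMod 2) {x} :=
    Submodule.mem_sup_right (Submodule.mem_span_singleton_self x)
  refine ⟨A ⊔ Submodule.span (ZMod 2) {x}, ?_, ?_, ?_⟩
  · exact lt_of_le_of_ne le_sup_left (fun h => hxA (h ▸ hxmem))
  · exact sup_le hle (Submodule.span_le.2 (by simp [hxB]))
  · have h1 : Module.finrank (ZMod 2) (Submodule.span (ZMod 2) ({x} : Set (Fin n → ZMod 2))) = 1 :=
      finrank_span_singleton hx0
    have h2 : A ⊓ Submodule.span (ZMod 2) {x} = ⊥ := by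
      rw [eq_bot_iff]
      rintro y ⟨hyA, hy⟩
      obtain ⟨c, rfl⟩ := Submodule.mem_span_singleton.1 hy
      rcases eq_or_ne c 0 with rfl | hc
      · simp
      · exact absurd (by simpa [inv_smul_smul₀ hc] using A.smul_mem c⁻¹ hyA) hxA
    have := Submodule.finrank_sup_add_finrank_inf_eq A (Submodule.span (ZMod 2) {x})
    rw [h2, h1] at this
    simpa using this

theorem aux_flag {n : ℕ} (d : ℕ) : ∀ (A B : Submodule (ZMod 2) (Fin n → ZMod 2)), A ≤ B →
    Module.finrank (ZMod 2) B = Module.finrank (ZMod 2) A + d →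
    ∃ g : ℕ → Submodule (ZMod 2) (Fin n → ZMod 2), g 0 = A ∧ g d = B ∧
      (∀ m ≤ d, Module.finrank (ZMod 2) (g m) = Module.finrank (ZMod 2) A + m) ∧
      (∀ m ≤ d, A ≤ g m ∧ g m ≤ B) ∧
      (∀ m < d, g m < g (m + 1)) := by
  induction d with
  | zero =>
    intro A B hle hrk
    have hAB : A = B := Submodule.eq_of_le_of_finrank_eq hle (by omega)
    refine ⟨fun _ => A, rfl, hAB.symm ▸ rfl, fun m hm => ?_, fun m hm => ⟨le_rfl, hle⟩,
      fun m hm => by omega⟩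
    have : m = 0 := by omega
    simp [this]
  | succ d ih =>
    intro A B hle hrk
    obtain ⟨A', hAA', hA'B, hrkA'⟩ := aux_step_up A B hle (by omega)
    obtain ⟨g, hg0, hgd, hgr, hgle, hgmono⟩ := ih A' B hA'B (by omega)
    refine ⟨fun m => if m = 0 then A else g (m - 1), by simp, by simp [hgd], ?_, ?_, ?_⟩
    · intro m hm
      rcases Nat.eq_zero_or_pos m with rfl | hpos
      · simp
      · have h5 := hgr (m - 1) (by omega)
        beta_reduce; rw [if_neg (show m ≠ 0 by omega)]
        omega
    · intro m hm
      rcases Nat.eq_zero_or_pos m with rfl | hpos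
      · simpa using hle
      · have := hgle (m - 1) (by omega)
        beta_reduce; rw [if_neg (show m ≠ 0 by omega)]
        exact ⟨le_trans hAA'.le this.1, this.2⟩
    · intro m hm
      rcases Nat.eq_zero_or_pos m with rfl | hpos
      · simpa [hg0] using hAA'
      · beta_reduce; rw [if_neg (show m ≠ 0 by omega), if_neg (show m + 1 ≠ 0 by omega)]
        have h6 : m + 1 - 1 = (m - 1) + 1 := by omega
        rw [h6]
        exact hgmono (m - 1) (by omega)

theorem aux_chain_le {n k : ℕ} {C : Submodule (ZMod 2) (Fin n → ZMod 2)}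
    {D : ℕ → Submodule (ZMod 2) (Fin n → ZMod 2)} (h : IsSubcodeChain k C D) :
    ∀ i < k, D i ≤ C := by
  intro i
  induction i with
  | zero => intro _; exact h.1.le
  | succ i ih => intro hi; exact le_trans (h.2.2 i hi).le (ih (by omega))

theorem aux_minDist_anti {n : ℕ} {A B : Submodule (ZMod 2) (Fin n → ZMod 2)}
    (hle : A ≤ B) (hne : A ≠ ⊥) : minDist B ≤ minDist A := by
  obtain ⟨a, haA, ha0⟩ := Submodule.exists_mem_ne_zero_of_ne_bot hne
  have hne' : {w | ∃ c ∈ A, c ≠ 0 ∧ wt c = w}.Nonempty := ⟨wt a, a, haA, ha0, rfl⟩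
  have hmem := Nat.sInf_mem hne'
  obtain ⟨c, hcA, hc0, hwc⟩ := hmem
  exact Nat.sInf_le ⟨c, hle hcA, hc0, hwc⟩

theorem aux_ne_bot {n k i : ℕ} {C : Submodule (ZMod 2) (Fin n → ZMod 2)}
    {D : ℕ → Submodule (ZMod 2) (Fin n → ZMod 2)} (h : IsSubcodeChain k C D)
    (hi : i < k) : D i ≠ ⊥ := by
  intro hbot
  have := h.2.1 i hi
  rw [hbot] at this
  simp only [finrank_bot] at this
  omega

theorem aux_chain_through {n k : ℕ} (C S : Submodule (ZMod 2) (Fin n → ZMod 2))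
    (hk : Module.finrank (ZMod 2) C = k) (hle : S ≤ C) (s : ℕ)
    (hs : Module.finrank (ZMod 2) S = s) (hs0 : 0 < s) (hsk : s ≤ k) :
    ∃ D, IsSubcodeChain k C D ∧ D (k - s) = S := by
  obtain ⟨gU, hU0, hUd, hUr, hUle, hUmono⟩ := aux_flag (k - s) S C hle (by omega)
  have hbot : Module.finrank (ZMod 2) S
      = Module.finrank (ZMod 2) (⊥ : Submodule (ZMod 2) (Fin n → ZMod 2)) + s := by
    simp only [finrank_bot]; omega
  obtain ⟨gD, hD0, hDd, hDr, hDle, hDmono⟩ := aux_flag s ⊥ S bot_le hbot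
  refine ⟨fun i => if i ≤ k - s then gU (k - s - i) else gD (k - i), ⟨?_, ?_, ?_⟩, ?_⟩
  · beta_reduce
    rw [if_pos (Nat.zero_le _)]
    simpa using hUd
  · intro i hi
    by_cases hcase : i ≤ k - s
    · beta_reduce; rw [if_pos hcase]
      have := hUr (k - s - i) (by omega)
      omega
    · beta_reduce; rw [if_neg hcase]
      have h7 := hDr (k - i) (by omega)
      simp only [finrank_bot] at h7
      omega
  · intro i hi
    by_cases hc1 : i + 1 ≤ k - s
    · beta_reduce; rw [if_pos hc1, if_pos (by omega)]
      have h8 : k - s - i = (k - s - (i + 1)) + 1 := by omega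
      rw [h8]
      exact hUmono (k - s - (i + 1)) (by omega)
    · by_cases hc2 : i ≤ k - s
      · -- i = k - s
        have hieq : i = k - s := by omega
        beta_reduce; rw [if_neg hc1, if_pos hc2]
        have h9 : k - s - i = 0 := by omega
        have h10 : k - (i + 1) = s - 1 := by omega
        rw [h9, h10, hU0]
        have := hDmono (s - 1) (by omega)
        rw [show s - 1 + 1 = s by omega, hDd] at this
        exact this
      · beta_reduce; rw [if_neg hc1, if_neg hc2]
        have h11 : k - i = (k - (i + 1)) + 1 := by omega
        rw [h11]
        exact hDmono (k - (i + 1)) (by omega)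
  · beta_reduce
    rw [if_pos le_rfl, Nat.sub_self]
    exact hU0

/-- If the ODP entry at dimension j (chain index k - j) is the first entry
greater than d(C), then j is the maximum dimension of a subcode of C with that
minimum distance; in particular C has no subcode of dimension j+1 with it. -/

theorem stmt_11 (n k j : ℕ) (C : Submodule (ZMod 2) (Fin n → ZMod 2))
    (hk : Module.finrank (ZMod 2) C = k) (p : ℕ → ℕ) (hp : IsODPdic k C p)
    (hj0 : 0 < j) (hjk : j < k)
    (h1 : p (k - (j + 1)) = minDist C) (h2 : minDist C < p (k - j)) :
    (∃ S : Submodule (ZMod 2) (Fin n → ZMod 2), S ≤ C ∧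
      Module.finrank (ZMod 2) S = j ∧ minDist S = p (k - j)) ∧
    ¬ ∃ S : Submodule (ZMod 2) (Fin n → ZMod 2), S ≤ C ∧
      Module.finrank (ZMod 2) S = j + 1 ∧ minDist S = p (k - j) := by
  obtain ⟨⟨Dopt, hchain, hprofile⟩, hzero, hopt⟩ := hp
  have hkj : k - j < k := by omega
  have hkj1 : k - (j + 1) < k := by omega
  -- monotonicity of p on [0, k)
  have hstep : ∀ i, i + 1 < k → p i ≤ p (i + 1) := by
    intro i hi
    rw [hprofile i (by omega), hprofile (i + 1) hi]
    exact aux_minDist_anti (hchain.2.2 i hi).le (aux_ne_bot hchain hi)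
  have hmono : ∀ b, b < k → ∀ a, a ≤ b → p a ≤ p b := by
    intro b
    induction b with
    | zero =>
      intro _ a ha
      have : a = 0 := by omega
      rw [this]
    | succ b ih =>
      intro hb a ha
      rcases Nat.lt_succ_iff_lt_or_eq.1 (Nat.lt_succ_of_le ha) with h | h
      · exact le_trans (ih (by omega) a (by omega)) (hstep b hb)
      · exact h ▸ le_rfl
  constructor
  · refine ⟨Dopt (k - j), aux_chain_le hchain (k - j) hkj, ?_, (hprofile (k - j) hkj).symm⟩
    have := hchain.2.1 (k - j) hkj
    omega
  · rintro ⟨S, hSC, hSrank, hSd⟩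
    obtain ⟨D', hc', hD'r⟩ := aux_chain_through C S hk hSC (j + 1) hSrank (by omega) (by omega)
    have hminr : minDist (D' (k - (j + 1))) = p (k - j) := by rw [hD'r, hSd]
    rcases hopt D' hc' with hall | ⟨t, htk, hpre, hlt⟩
    · have := hall (k - (j + 1)) hkj1
      simp only at this
      rw [hminr] at this
      omega
    · simp only at hlt
      by_cases hts : t ≤ k - (j + 1)
      · have h6 : minDist C ≤ minDist (D' t) :=
          aux_minDist_anti (aux_chain_le hc' t htk) (aux_ne_bot hc' htk)
        have h7 : p t ≤ p (k - (j + 1)) := hmono (k - (j + 1)) hkj1 t hts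
        omega
      · have := hpre (k - (j + 1)) (by omega)
        simp only at this
        rw [hminr] at this
        omega
end
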